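/- For every strong limit cardinal κ, the chromatic number of G(κ,132) equals κ. -/

import Mathlib

open Cardinal

/-- The shift graph `G(S, 132)` on a linear order `S`. -/
def S132 (S : Type*) [LinearOrder S] : SimpleGraph {p : S × S // p.1 < p.2} where
  Adj a b := a.val.2 = b.val.1 ∨ b.val.2 = a.val.1
  symm := ⟨fun a b h => Or.symm h⟩
  loopless := ⟨fun a h => by rcases h with h | h <;> exact a.prop.ne' h⟩

/-- The chromatic number of a graph, as a cardinal: the least cardinality of a colour
set admitting a proper vertex colouring. -/
noncomputable def chromNum {V : Type} (G : SimpleGraph V) : Cardinal :=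
  sInf { c | ∃ (β : Type) (f : V → β), (∀ a b, G.Adj a b → f a ≠ f b) ∧ Cardinal.mk β = c }

/-- For every strong limit cardinal `κ`, the chromatic number of `G(κ,132)` is `κ`. -/
theorem stmt_17 (κ : Cardinal.{0}) (hκ : κ.IsStrongLimit) :
    chromNum (S132 κ.ord.ToType) = κ := by
  have hmem : κ ∈ { c | ∃ (β : Type) (f : {p : κ.ord.ToType × κ.ord.ToType // p.1 < p.2} → β),
      (∀ a b, (S132 κ.ord.ToType).Adj a b → f a ≠ f b) ∧ Cardinal.mk β = c } := by
    refine ⟨κ.ord.ToType, fun p => p.val.1, ?_, Cardinal.mk_ord_toType κ⟩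
    rintro a b (h | h)
    · exact ne_of_lt (lt_of_lt_of_eq a.prop h)
    · exact ne_of_gt (lt_of_lt_of_eq b.prop h)
  refine le_antisymm (csInf_le' hmem) (le_csInf ⟨κ, hmem⟩ ?_)
  rintro c ⟨β, f, hf, rfl⟩
  by_contra hlt
  push_neg at hlt
  have h2 : (2 : Cardinal) ^ #β < κ := hκ.two_power_lt hlt
  have hinj : Function.Injective (fun y : κ.ord.ToType =>
      ({b | ∃ x, ∃ hx : x < y, f ⟨(x, y), hx⟩ = b} : Set β)) := by
    intro y y' hyy
    simp only [] at hyy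
    by_contra hne
    rcases lt_or_gt_of_ne hne with hlt' | hlt'
    · have hc : f ⟨(y, y'), hlt'⟩ ∈ ({b | ∃ x, ∃ hx : x < y, f ⟨(x, y), hx⟩ = b} : Set β) := by
        rw [hyy]; exact ⟨y, hlt', rfl⟩
      obtain ⟨x, hx, hfx⟩ := hc
      exact hf ⟨(x, y), hx⟩ ⟨(y, y'), hlt'⟩ (Or.inl rfl) hfx
    · have hc : f ⟨(y', y), hlt'⟩ ∈ ({b | ∃ x, ∃ hx : x < y', f ⟨(x, y'), hx⟩ = b} : Set β) := by
        rw [← hyy]; exact ⟨y', hlt', rfl⟩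
      obtain ⟨x, hx, hfx⟩ := hc
      exact hf ⟨(x, y'), hx⟩ ⟨(y', y), hlt'⟩ (Or.inl rfl) hfx
  have hle : κ ≤ 2 ^ #β := by
    calc κ = #κ.ord.ToType := (Cardinal.mk_ord_toType κ).symm
    _ ≤ #(Set β) := Cardinal.mk_le_of_injective hinj
    _ = 2 ^ #β := Cardinal.mk_set
  exact absurd hle (not_le.mpr h2)
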